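/- Let G = (V,E) be an infinite, connected graph in which every vertex has degree at most D, and suppose the Green's function g of simple random walk on G satisfies g(x,y) ≤ exp(−a·d(x,y) + a′) for all vertices x, y, for some constants a > 0 and a′ < ∞. Let o ∈ V and p ∈ (0,1). Then the minimum number of toppling moves needed to transport mass p to graph distance at least n from o, starting from the unit point mass δ_o, satisfies both N_p(G, B_n, δ_o) ≤ (1−p)^{−1} · e^{a′} · D^{2n} and N_p(G, B_n, δ_o) ≥ (p / (2·e^{a+a′})) · e^{a·n} for every integer n ≥ 1. -/

import Mathlib

open scoped Classical ENNReal

noncomputable section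

variable {V : Type*}

/-- A mass distribution: a nonnegative, finitely supported function on the vertices. -/
def IsMassDist (μ : V → ℝ) : Prop :=
  (∀ v, 0 ≤ μ v) ∧ (Function.support μ).Finite

/-- The unit point mass at a vertex `o`. -/
def pointMass (o : V) : V → ℝ := fun u => if u = o then 1 else 0

/-- The result of toppling mass `m` at the vertex `v`: remove mass `m` from `v` and
distribute it equally among the neighbors of `v`. -/
def topple (G : SimpleGraph V) [G.LocallyFinite] (μ : V → ℝ) (v : V) (m : ℝ) : V → ℝ :=
  fun u => μ u - (if u = v then m else 0) + (if G.Adj v u then m / (G.degree v : ℝ) else 0)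

/-- `ToppleSeq G μ₀ t μ₁` : there is a sequence of `t` valid toppling moves
taking `μ₀` to `μ₁`. -/
def ToppleSeq (G : SimpleGraph V) [G.LocallyFinite] (μ₀ : V → ℝ) (t : ℕ) (μ₁ : V → ℝ) : Prop :=
  ∃ μs : ℕ → V → ℝ, μs 0 = μ₀ ∧ μs t = μ₁ ∧
    ∀ i < t, ∃ v m, 0 < m ∧ m ≤ μs i v ∧ μs (i + 1) = topple G (μs i) v m

/-- `CanTransport G A p μ₀ t` : starting from `μ₀` there are `t` toppling moves after which
the total mass outside of `A` is at least `p`. -/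
def CanTransport (G : SimpleGraph V) [G.LocallyFinite] (A : Set V) (p : ℝ)
    (μ₀ : V → ℝ) (t : ℕ) : Prop :=
  ∃ μ₁ : V → ℝ, ToppleSeq G μ₀ t μ₁ ∧ p ≤ ∑' v : {v : V // v ∉ A}, μ₁ v

/-- The open ball of radius `n` around `o` in the graph distance. -/
def gball (G : SimpleGraph V) (o : V) (n : ℕ) : Set V := {u | G.dist o u < n}


/-- `rwKernel G k x y` is the `k`-step transition probability of simple random walk on `G`
(at each step the walk moves to a uniformly random neighbor of its current vertex). -/
def rwKernel (G : SimpleGraph V) [G.LocallyFinite] : ℕ → V → V → ℝ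
  | 0 => fun x y => if x = y then 1 else 0
  | (k + 1) => fun x y => ∑ z ∈ G.neighborFinset x, ((G.degree x : ℝ))⁻¹ * rwKernel G k z y

/-- The Green's function of simple random walk on `G`: the expected number of visits to `y`
of the walk started at `x`, with value in `ℝ≥0∞` (it is infinite for recurrent walks). -/
def greenFn (G : SimpleGraph V) [G.LocallyFinite] (x y : V) : ℝ≥0∞ :=
  ∑' k : ℕ, ENNReal.ofReal (rwKernel G k x y)

section Aux
variable {V : Type*} (G : SimpleGraph V) [G.LocallyFinite]

lemma rwKernel_nonneg : ∀ (k : ℕ) (x y : V), 0 ≤ rwKernel G k x y := by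
  intro k
  induction k with
  | zero => intro x y; simp [rwKernel]; positivity
  | succ k ih =>
    intro x y
    simp only [rwKernel]
    apply Finset.sum_nonneg
    intro z _
    exact mul_nonneg (by positivity) (ih z y)

lemma rwKernel_one (x y : V) :
    rwKernel G 1 x y = if G.Adj x y then ((G.degree x : ℝ))⁻¹ else 0 := by
  simp only [rwKernel]
  have : ∀ z ∈ G.neighborFinset x,
      ((G.degree x : ℝ))⁻¹ * (if z = y then 1 else 0)
        = if z = y then ((G.degree x : ℝ))⁻¹ else 0 := by
    intro z _; split <;> simp
  rw [Finset.sum_congr rfl this, Finset.sum_ite_eq' (G.neighborFinset x) y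
    (fun _ => ((G.degree x : ℝ))⁻¹)]
  simp [SimpleGraph.mem_neighborFinset]

/-- Sum of a nonnegative function over any finset is at most its sum over a finset
containing its support. -/
lemma sum_le_sum_support {s T : Finset V} {f : V → ℝ} (hf : ∀ w, 0 ≤ f w)
    (h0 : ∀ w, w ∉ s → f w = 0) : ∑ w ∈ T, f w ≤ ∑ w ∈ s, f w := by
  rw [← Finset.sum_filter_of_ne (p := fun w => w ∈ s)
    (by intro x _ hx; by_contra h; exact hx (h0 x h))]
  exact Finset.sum_le_sum_of_subset_of_nonneg
    (fun x hx => (Finset.mem_filter.mp hx).2) (fun w _ _ => hf w)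

end Aux
section Aux2
variable {V : Type*} (G : SimpleGraph V) [G.LocallyFinite]

lemma rwKernel_succ (k : ℕ) (x y : V) :
    rwKernel G (k + 1) x y = ∑ z ∈ G.neighborFinset x, ((G.degree x : ℝ))⁻¹ * rwKernel G k z y :=
  rfl

/-- Chapman–Kolmogorov-type inequality over an arbitrary finset. -/
lemma sum_rwKernel_one_mul_le (T : Finset V) (z u : V) (K : ℕ) :
    ∑ w ∈ T, rwKernel G 1 z w * rwKernel G K w u ≤ rwKernel G (K + 1) z u := by
  have h1 : rwKernel G (K + 1) z u
      = ∑ w ∈ G.neighborFinset z, rwKernel G 1 z w * rwKernel G K w u := by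
    rw [rwKernel_succ]
    refine Finset.sum_congr rfl fun w hw => ?_
    rw [rwKernel_one, if_pos ((SimpleGraph.mem_neighborFinset _ _ _).mp hw)]
  rw [h1]
  refine sum_le_sum_support (fun w => mul_nonneg ?_ (rwKernel_nonneg G K w u)) ?_
  · rw [rwKernel_one]; split <;> positivity
  · intro w hw
    rw [rwKernel_one, if_neg (by simpa [SimpleGraph.mem_neighborFinset] using hw), zero_mul]

variable {a a' : ℝ}

/-- Partial sums of the kernel are bounded by the Green function bound. -/
lemma sum_range_rwKernel_le
    (hgreen : ∀ x y : V, greenFn G x y ≤ ENNReal.ofReal (Real.exp (-a * (G.dist x y : ℝ) + a')))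
    (x y : V) (K : ℕ) :
    ∑ k ∈ Finset.range K, rwKernel G k x y ≤ Real.exp (-a * (G.dist x y : ℝ) + a') := by
  rw [← ENNReal.ofReal_le_ofReal_iff (Real.exp_nonneg _)]
  calc ENNReal.ofReal (∑ k ∈ Finset.range K, rwKernel G k x y)
      = ∑ k ∈ Finset.range K, ENNReal.ofReal (rwKernel G k x y) :=
        ENNReal.ofReal_sum_of_nonneg (fun k _ => rwKernel_nonneg G k x y)
    _ ≤ greenFn G x y := ENNReal.sum_le_tsum _
    _ ≤ _ := hgreen x y

lemma tendsto_rwKernel_zero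
    (hgreen : ∀ x y : V, greenFn G x y ≤ ENNReal.ofReal (Real.exp (-a * (G.dist x y : ℝ) + a')))
    (x y : V) :
    Filter.Tendsto (fun K => rwKernel G K x y) Filter.atTop (nhds 0) := by
  have hs : Summable (fun k => rwKernel G k x y) :=
    summable_of_sum_range_le (fun k => rwKernel_nonneg G k x y)
      (fun K => sum_range_rwKernel_le G hgreen x y K)
  exact hs.tendsto_atTop_zero

end Aux2
section Master
variable {V : Type*} {G : SimpleGraph V} [G.LocallyFinite]
variable {o : V} {t : ℕ} {μs : ℕ → V → ℝ} {vs : ℕ → V} {ms : ℕ → ℝ} {a a' : ℝ}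

lemma master_identity (h0 : μs 0 = pointMass o)
    (hstep : ∀ i < t, 0 < ms i ∧ ms i ≤ μs i (vs i) ∧ μs (i+1) = topple G (μs i) (vs i) (ms i)) :
    ∀ i ≤ t, ∀ u, μs i u = pointMass o u
      - (∑ j ∈ Finset.range i, if u = vs j then ms j else 0)
      + (∑ j ∈ Finset.range i, if G.Adj (vs j) u then ms j / (G.degree (vs j) : ℝ) else 0) := by
  intro i
  induction i with
  | zero => intro _ u; simp [h0]
  | succ i ih =>
    intro hi u
    have hit : i < t := hi
    rw [(hstep i hit).2.2]
    simp only [topple]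
    rw [ih (le_of_lt hit) u, Finset.sum_range_succ, Finset.sum_range_succ]
    ring

lemma master_nonneg (h0 : μs 0 = pointMass o)
    (hstep : ∀ i < t, 0 < ms i ∧ ms i ≤ μs i (vs i) ∧ μs (i+1) = topple G (μs i) (vs i) (ms i)) :
    ∀ i ≤ t, ∀ u, 0 ≤ μs i u := by
  intro i
  induction i with
  | zero => intro _ u; rw [h0]; simp only [pointMass]; split <;> norm_num
  | succ i ih =>
    intro hi u
    have hit : i < t := hi
    obtain ⟨hm, hle, heq⟩ := hstep i hit
    rw [heq]
    simp only [topple]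
    have h1 : 0 ≤ μs i u - (if u = vs i then ms i else 0) := by
      split
      · next h => subst h; linarith
      · simpa using ih hit.le u
    have h2 : 0 ≤ (if G.Adj (vs i) u then ms i / (G.degree (vs i) : ℝ) else 0) := by
      split <;> positivity
    linarith

lemma master_F_le
    (hgreen : ∀ x y : V, greenFn G x y ≤ ENNReal.ofReal (Real.exp (-a * (G.dist x y : ℝ) + a')))
    (h0 : μs 0 = pointMass o)
    (hstep : ∀ i < t, 0 < ms i ∧ ms i ≤ μs i (vs i) ∧ μs (i+1) = topple G (μs i) (vs i) (ms i)) :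
    ∀ u, pointMass o u
        + (∑ j ∈ Finset.range t, if G.Adj (vs j) u then ms j / (G.degree (vs j) : ℝ) else 0)
      ≤ Real.exp (-a * (G.dist o u : ℝ) + a') := by
  classical
  set T : Finset V := insert o ((Finset.range t).image vs
      ∪ (Finset.range t).biUnion (fun j => G.neighborFinset (vs j))) with hT
  have hoT : o ∈ T := Finset.mem_insert_self _ _
  have hvsT : ∀ j ∈ Finset.range t, vs j ∈ T := fun j hj =>
    Finset.mem_insert_of_mem (Finset.mem_union_left _ (Finset.mem_image_of_mem vs hj))
  set e : V → ℝ := fun w => ∑ j ∈ (Finset.range t).filter (fun j => vs j = w), ms j with he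
  have hms : ∀ j ∈ Finset.range t, 0 ≤ ms j := fun j hj =>
    (hstep j (Finset.mem_range.mp hj)).1.le
  have he_nonneg : ∀ w, 0 ≤ e w := fun w =>
    Finset.sum_nonneg fun j hj => hms j (Finset.mem_filter.mp hj).1
  -- grouping
  have group : ∀ u, (∑ j ∈ Finset.range t,
      if G.Adj (vs j) u then ms j / (G.degree (vs j) : ℝ) else 0)
      = ∑ w ∈ T, e w * rwKernel G 1 w u := by
    intro u
    have h1 : ∀ w, e w * rwKernel G 1 w u
        = ∑ j ∈ (Finset.range t).filter (fun j => vs j = w),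
            (if G.Adj (vs j) u then ms j / (G.degree (vs j) : ℝ) else 0) := by
      intro w
      rw [he, Finset.sum_mul]
      refine Finset.sum_congr rfl fun j hj => ?_
      have hw : vs j = w := (Finset.mem_filter.mp hj).2
      rw [hw, rwKernel_one]
      split <;> simp [div_eq_inv_mul, mul_comm]
    rw [Finset.sum_congr rfl (fun w _ => h1 w)]
    exact (Finset.sum_fiberwise_of_maps_to hvsT _).symm
  -- e as the out-sum
  have he_eq : ∀ u, e u = ∑ j ∈ Finset.range t, (if u = vs j then ms j else 0) := by
    intro u
    simp only [he]
    rw [Finset.sum_filter]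
    exact Finset.sum_congr rfl fun j _ => if_congr eq_comm rfl rfl
  -- (*) inequality
  have star : ∀ u, e u ≤ pointMass o u + ∑ w ∈ T, e w * rwKernel G 1 w u := by
    intro u
    have hnn := master_nonneg h0 hstep t le_rfl u
    rw [master_identity h0 hstep t le_rfl u] at hnn
    rw [he_eq u, ← group u]
    linarith
  -- recursion step
  have recur : ∀ K u, ∑ w ∈ T, e w * rwKernel G K w u
      ≤ rwKernel G K o u + ∑ w ∈ T, e w * rwKernel G (K+1) w u := by
    intro K u
    have step1 : ∑ w ∈ T, e w * rwKernel G K w u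
        ≤ ∑ w ∈ T, (pointMass o w + ∑ z ∈ T, e z * rwKernel G 1 z w) * rwKernel G K w u :=
      Finset.sum_le_sum fun w _ =>
        mul_le_mul_of_nonneg_right (star w) (rwKernel_nonneg G K w u)
    have step2 : ∑ w ∈ T, (pointMass o w + ∑ z ∈ T, e z * rwKernel G 1 z w) * rwKernel G K w u
        = (∑ w ∈ T, pointMass o w * rwKernel G K w u)
          + ∑ w ∈ T, (∑ z ∈ T, e z * rwKernel G 1 z w) * rwKernel G K w u := by
      rw [← Finset.sum_add_distrib]
      exact Finset.sum_congr rfl fun w _ => add_mul _ _ _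
    have step3 : (∑ w ∈ T, pointMass o w * rwKernel G K w u) = rwKernel G K o u := by
      have : ∀ w ∈ T, pointMass o w * rwKernel G K w u
          = if w = o then rwKernel G K w u else 0 := by
        intro w _; simp only [pointMass]; split <;> simp
      rw [Finset.sum_congr rfl this, Finset.sum_ite_eq' T o (fun w => rwKernel G K w u),
        if_pos hoT]
    have step4 : ∑ w ∈ T, (∑ z ∈ T, e z * rwKernel G 1 z w) * rwKernel G K w u
        ≤ ∑ z ∈ T, e z * rwKernel G (K+1) z u := by
      have swap : ∑ w ∈ T, (∑ z ∈ T, e z * rwKernel G 1 z w) * rwKernel G K w u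
          = ∑ z ∈ T, e z * ∑ w ∈ T, rwKernel G 1 z w * rwKernel G K w u := by
        calc ∑ w ∈ T, (∑ z ∈ T, e z * rwKernel G 1 z w) * rwKernel G K w u
            = ∑ w ∈ T, ∑ z ∈ T, e z * rwKernel G 1 z w * rwKernel G K w u :=
              Finset.sum_congr rfl fun w _ => Finset.sum_mul _ _ _
          _ = ∑ z ∈ T, ∑ w ∈ T, e z * rwKernel G 1 z w * rwKernel G K w u := Finset.sum_comm
          _ = ∑ z ∈ T, e z * ∑ w ∈ T, rwKernel G 1 z w * rwKernel G K w u := by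
              refine Finset.sum_congr rfl fun z _ => ?_
              rw [Finset.mul_sum]
              exact Finset.sum_congr rfl fun w _ => by ring
      rw [swap]
      exact Finset.sum_le_sum fun z _ => mul_le_mul_of_nonneg_left
        (sum_rwKernel_one_mul_le G T z u K) (he_nonneg z)
    calc ∑ w ∈ T, e w * rwKernel G K w u ≤ _ := step1
      _ = _ := step2
      _ ≤ rwKernel G K o u + ∑ w ∈ T, e w * rwKernel G (K+1) w u := by
          rw [step3]; exact add_le_add_right step4 _
  -- chain
  have chain : ∀ K u, pointMass o u + ∑ w ∈ T, e w * rwKernel G 1 w u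
      ≤ (∑ k ∈ Finset.range (K+1), rwKernel G k o u)
        + ∑ w ∈ T, e w * rwKernel G (K+1) w u := by
    intro K
    induction K with
    | zero =>
      intro u
      have h00 : rwKernel G 0 o u = pointMass o u := by
        simp [rwKernel, pointMass, eq_comm]
      rw [Finset.sum_range_one, h00]
    | succ K ih =>
      intro u
      refine (ih u).trans ?_
      conv_rhs => rw [Finset.sum_range_succ]
      linarith [recur (K+1) u]
  -- limit
  intro u
  rw [group u]
  have htend : Filter.Tendsto
      (fun K : ℕ => Real.exp (-a * (G.dist o u : ℝ) + a')
        + ∑ w ∈ T, e w * rwKernel G (K+1) w u) Filter.atTop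
      (nhds (Real.exp (-a * (G.dist o u : ℝ) + a') + 0)) := by
    refine Filter.Tendsto.const_add (Real.exp (-a * (G.dist o u : ℝ) + a')) ?_
    have hsum : Filter.Tendsto
        (fun K : ℕ => ∑ w ∈ T, e w * rwKernel G (K+1) w u) Filter.atTop
        (nhds (∑ w ∈ T, (0:ℝ))) := by
      refine tendsto_finset_sum _ fun w _ => ?_
      have h1 : Filter.Tendsto (fun K => rwKernel G (K+1) w u) Filter.atTop (nhds 0) :=
        (tendsto_rwKernel_zero G hgreen w u).comp (Filter.tendsto_add_atTop_nat 1)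
      simpa using h1.const_mul (e w)
    simpa using hsum
  have hbound : ∀ K : ℕ, pointMass o u + ∑ w ∈ T, e w * rwKernel G 1 w u
      ≤ Real.exp (-a * (G.dist o u : ℝ) + a') + ∑ w ∈ T, e w * rwKernel G (K+1) w u := by
    intro K
    refine (chain K u).trans (add_le_add_left ?_ _)
    exact sum_range_rwKernel_le G hgreen o u (K+1)
  have := ge_of_tendsto' htend hbound
  simpa using this

end Master
section MasterCor
variable {V : Type*} {G : SimpleGraph V} [G.LocallyFinite]
variable {o : V} {t : ℕ} {μs : ℕ → V → ℝ} {vs : ℕ → V} {ms : ℕ → ℝ} {a a' : ℝ}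

lemma master_mass_le
    (hgreen : ∀ x y : V, greenFn G x y ≤ ENNReal.ofReal (Real.exp (-a * (G.dist x y : ℝ) + a')))
    (h0 : μs 0 = pointMass o)
    (hstep : ∀ i < t, 0 < ms i ∧ ms i ≤ μs i (vs i) ∧ μs (i+1) = topple G (μs i) (vs i) (ms i)) :
    ∀ i ≤ t, ∀ u, μs i u ≤ Real.exp (-a * (G.dist o u : ℝ) + a') := by
  intro i hi u
  rw [master_identity h0 hstep i hi u]
  have hF := master_F_le hgreen h0 hstep u
  have h1 : 0 ≤ ∑ j ∈ Finset.range i, (if u = vs j then ms j else 0) := by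
    refine Finset.sum_nonneg fun j hj => ?_
    have : 0 < ms j := (hstep j (lt_of_lt_of_le (Finset.mem_range.mp hj) hi)).1
    split <;> positivity
  have h2 : (∑ j ∈ Finset.range i,
        if G.Adj (vs j) u then ms j / (G.degree (vs j) : ℝ) else 0)
      ≤ ∑ j ∈ Finset.range t,
        if G.Adj (vs j) u then ms j / (G.degree (vs j) : ℝ) else 0 := by
    refine Finset.sum_le_sum_of_subset_of_nonneg
      (Finset.range_subset_range.mpr hi) fun j hj _ => ?_
    have : 0 < ms j := (hstep j (Finset.mem_range.mp hj)).1
    split <;> positivity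
  linarith

lemma master_emission_le
    (hgreen : ∀ x y : V, greenFn G x y ≤ ENNReal.ofReal (Real.exp (-a * (G.dist x y : ℝ) + a')))
    (h0 : μs 0 = pointMass o)
    (hstep : ∀ i < t, 0 < ms i ∧ ms i ≤ μs i (vs i) ∧ μs (i+1) = topple G (μs i) (vs i) (ms i)) :
    ∀ w, (∑ j ∈ Finset.range t, if w = vs j then ms j else 0)
      ≤ Real.exp (-a * (G.dist o w : ℝ) + a') := by
  intro w
  have hnn := master_nonneg h0 hstep t le_rfl w
  rw [master_identity h0 hstep t le_rfl w] at hnn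
  have hF := master_F_le hgreen h0 hstep w
  linarith

lemma master_support
    (h0 : μs 0 = pointMass o)
    (hstep : ∀ i < t, 0 < ms i ∧ ms i ≤ μs i (vs i) ∧ μs (i+1) = topple G (μs i) (vs i) (ms i))
    (u : V) (hu1 : u ≠ o) (hu2 : ∀ j < t, u ≠ vs j)
    (hu3 : ∀ j < t, ¬ G.Adj (vs j) u) : μs t u = 0 := by
  rw [master_identity h0 hstep t le_rfl u]
  have s1 : (∑ j ∈ Finset.range t, if u = vs j then ms j else 0) = 0 :=
    Finset.sum_eq_zero fun j hj => if_neg (hu2 j (Finset.mem_range.mp hj))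
  have s2 : (∑ j ∈ Finset.range t,
      if G.Adj (vs j) u then ms j / (G.degree (vs j) : ℝ) else 0) = 0 :=
    Finset.sum_eq_zero fun j hj => if_neg (hu3 j (Finset.mem_range.mp hj))
  simp [pointMass, hu1, s1, s2]

end MasterCor

section Graph
variable {V : Type*} (G : SimpleGraph V) [G.LocallyFinite]

lemma degree_pos_of_connected [Infinite V] (hconn : G.Connected) (v : V) :
    0 < G.degree v := by
  rw [G.degree_pos_iff_exists_adj]
  obtain ⟨u, hu⟩ := exists_ne v
  obtain ⟨p⟩ := hconn v u
  cases p with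
  | nil => exact absurd rfl hu
  | cons h q => exact ⟨_, h⟩

lemma conservation {W : Finset V} {μ : V → ℝ} {v : V} {m : ℝ}
    (hdeg : 0 < G.degree v) (hv : v ∈ W) (hN : G.neighborFinset v ⊆ W) :
    ∑ u ∈ W, topple G μ v m u = ∑ u ∈ W, μ u := by
  simp only [topple]
  rw [Finset.sum_add_distrib, Finset.sum_sub_distrib]
  have h1 : ∑ u ∈ W, (if u = v then m else 0) = m := by
    rw [Finset.sum_ite_eq' W v (fun _ => m), if_pos hv]
  have h2 : ∑ u ∈ W, (if G.Adj v u then m / (G.degree v : ℝ) else 0) = m := by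
    have h3 : ∑ u ∈ W, (if G.Adj v u then m / (G.degree v : ℝ) else 0)
        = ∑ u ∈ G.neighborFinset v, (if G.Adj v u then m / (G.degree v : ℝ) else 0) :=
      (Finset.sum_subset hN (fun u _ hu =>
        if_neg (by simpa [SimpleGraph.mem_neighborFinset] using hu))).symm
    rw [h3, Finset.sum_congr rfl
      (fun u hu => if_pos ((SimpleGraph.mem_neighborFinset _ _ _).mp hu)),
      Finset.sum_const, SimpleGraph.card_neighborFinset_eq_degree, nsmul_eq_mul]
    field_simp
  rw [h1, h2]; ring

/-- Vertices reachable by a walk of length exactly `k` from `o`. -/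
def reachSet (o : V) : ℕ → Finset V
  | 0 => {o}
  | (k+1) => (reachSet o k).biUnion (fun v => G.neighborFinset v)

lemma reachSet_succ (o : V) (k : ℕ) :
    reachSet G o (k+1) = (reachSet G o k).biUnion (fun v => G.neighborFinset v) := rfl

lemma mem_reachSet_of_walk (o : V) :
    ∀ {x u : V} (p : G.Walk x u) (k : ℕ), x ∈ reachSet G o k →
      u ∈ reachSet G o (k + p.length) := by
  intro x u p
  induction p with
  | nil => intro k hk; simpa using hk
  | @cons x b u h q ih =>
    intro k hk
    have hb : b ∈ reachSet G o (k + 1) := by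
      rw [reachSet_succ]
      exact Finset.mem_biUnion.mpr ⟨x, hk, (SimpleGraph.mem_neighborFinset _ _ _).mpr h⟩
    have h2 := ih (k+1) hb
    rw [SimpleGraph.Walk.length_cons]
    have heq : k + (q.length + 1) = (k + 1) + q.length := by omega
    rw [heq]; exact h2

lemma card_reachSet_le (o : V) (D : ℕ) (hD : ∀ v : V, G.degree v ≤ D) (k : ℕ) :
    (reachSet G o k).card ≤ D ^ k := by
  induction k with
  | zero => simp [reachSet]

  | succ k ih =>
    calc (reachSet G o (k+1)).card
        ≤ ∑ v ∈ reachSet G o k, (G.neighborFinset v).card := Finset.card_biUnion_le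
      _ ≤ ∑ v ∈ reachSet G o k, D := Finset.sum_le_sum fun v _ => by
          rw [SimpleGraph.card_neighborFinset_eq_degree]; exact hD v
      _ = (reachSet G o k).card * D := by rw [Finset.sum_const, smul_eq_mul]
      _ ≤ D ^ k * D := Nat.mul_le_mul_right D ih
      _ = D ^ (k+1) := by ring

lemma geom_sum_le_pow {D : ℕ} (hD : 2 ≤ D) (n : ℕ) :
    ∑ k ∈ Finset.range n, D ^ k ≤ D ^ n := by
  induction n with
  | zero => simp
  | succ n ih =>
    rw [Finset.sum_range_succ, pow_succ]
    calc (∑ k ∈ Finset.range n, D ^ k) + D ^ n ≤ D ^ n + D ^ n := by omega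
      _ = D ^ n * 2 := by ring
      _ ≤ D ^ n * D := Nat.mul_le_mul_left _ hD

end Graph
section Lower
variable {V : Type*}

lemma lower_bound (G : SimpleGraph V) [G.LocallyFinite] [Infinite V]
    (hconn : G.Connected)
    (a a' : ℝ) (ha : 0 < a)
    (hgreen : ∀ x y : V, greenFn G x y ≤ ENNReal.ofReal (Real.exp (-a * (G.dist x y : ℝ) + a')))
    (o : V) (p : ℝ) (hp0 : 0 < p) (hp1 : p < 1) (n : ℕ) (hn : 1 ≤ n)
    (t : ℕ) (hcan : CanTransport G (gball G o n) p (pointMass o) t) :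
    p / (2 * Real.exp (a + a')) * Real.exp (a * n) ≤ (t : ℝ) := by
  classical
  obtain ⟨μ₁, ⟨μs, h0, ht, hsteps⟩, hp⟩ := hcan
  choose! v m h1 h2 h3 using hsteps
  have hstep' : ∀ i < t, 0 < m i ∧ m i ≤ μs i (v i)
      ∧ μs (i+1) = topple G (μs i) (v i) (m i) :=
    fun i hi => ⟨h1 i hi, h2 i hi, h3 i hi⟩
  set A : Set V := gball G o n with hA
  have hoA : o ∈ A := by
    simp only [hA, gball, Set.mem_setOf_eq, SimpleGraph.dist_self]
    omega
  set c : ℝ := Real.exp (-a * ((n : ℝ) - 1) + a') with hc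
  have hc0 : 0 < c := Real.exp_pos _
  set inc : ℕ → V → ℝ :=
    fun i u => if G.Adj (v i) u then m i / (G.degree (v i) : ℝ) else 0 with hinc
  have hinc_nonneg : ∀ i, i < t → ∀ u, 0 ≤ inc i u := by
    intro i hi u
    simp only [hinc]
    have := (h1 i hi)
    split <;> positivity
  set H : V → ℝ := fun u => ∑ i ∈ Finset.range t,
    (if n - 1 ≤ G.dist o (v i) then inc i u else 0) with hH
  have hH_nonneg : ∀ u, 0 ≤ H u := by
    intro u
    refine Finset.sum_nonneg fun i hi => ?_
    have := hinc_nonneg i (Finset.mem_range.mp hi) u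
    split
    · exact this
    · exact le_rfl
  -- distance fact
  have hdist : ∀ i, ∀ u, u ∉ A → G.Adj (v i) u → n - 1 ≤ G.dist o (v i) := by
    intro i u hu hadj
    have h4 : n ≤ G.dist o u := by
      by_contra h5
      exact hu (by simpa [hA, gball, Set.mem_setOf_eq] using Nat.lt_of_not_le h5)
    have h5 : G.dist o u ≤ G.dist o (v i) + G.dist (v i) u := hconn.dist_triangle
    have h6 : G.dist (v i) u = 1 := SimpleGraph.dist_eq_one_iff_adj.mpr hadj
    omega
  -- pointwise bound
  have key1 : ∀ u, Set.indicator {x | x ∉ A} μ₁ u ≤ H u := by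
    intro u
    rw [Set.indicator_apply]
    split
    · next hu =>
      have hu' : u ∉ A := hu
      have huo : u ≠ o := fun h => hu' (h ▸ hoA)
      rw [← ht]
      rw [master_identity h0 hstep' t le_rfl u]
      have hpm : pointMass o u = 0 := by simp [pointMass, huo]
      have hout : 0 ≤ ∑ j ∈ Finset.range t, (if u = v j then m j else 0) := by
        refine Finset.sum_nonneg fun j hj => ?_
        have := h1 j (Finset.mem_range.mp hj)
        split <;> positivity
      have hsum : (∑ j ∈ Finset.range t,
          if G.Adj (v j) u then m j / (G.degree (v j) : ℝ) else 0) ≤ H u := by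
        rw [hH]
        refine Finset.sum_le_sum fun j hj => ?_
        by_cases hcond : n - 1 ≤ G.dist o (v j)
        · rw [if_pos hcond]
        · rw [if_neg hcond]
          have hnadj : ¬ G.Adj (v j) u := fun hadj => hcond (hdist j u hu' hadj)
          simp [hinc, hnadj]
      calc pointMass o u - (∑ j ∈ Finset.range t, if u = v j then m j else 0)
            + (∑ j ∈ Finset.range t, if G.Adj (v j) u then m j / (G.degree (v j) : ℝ) else 0)
          ≤ ∑ j ∈ Finset.range t, (if G.Adj (v j) u then m j / (G.degree (v j) : ℝ) else 0) := by
            rw [hpm]; linarith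
        _ ≤ H u := hsum
    · exact hH_nonneg u
  -- summability
  set T' : Finset V := insert o ((Finset.range t).image v
      ∪ (Finset.range t).biUnion (fun j => G.neighborFinset (v j))) with hT'
  have hsupp : ∀ u ∉ T', Set.indicator {x | x ∉ A} μ₁ u = 0 := by
    intro u hu
    have huo : u ≠ o := fun h => hu (h ▸ Finset.mem_insert_self o _)
    have huv : ∀ j < t, u ≠ v j := by
      intro j hj h
      exact hu (Finset.mem_insert_of_mem (Finset.mem_union_left _
        (h ▸ Finset.mem_image_of_mem v (Finset.mem_range.mpr hj))))
    have hua : ∀ j < t, ¬ G.Adj (v j) u := by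
      intro j hj hadj
      exact hu (Finset.mem_insert_of_mem (Finset.mem_union_right _
        (Finset.mem_biUnion.mpr ⟨j, Finset.mem_range.mpr hj,
          (SimpleGraph.mem_neighborFinset _ _ _).mpr hadj⟩)))
    have : μ₁ u = 0 := by rw [← ht]; exact master_support h0 hstep' u huo huv hua
    simp [Set.indicator_apply, this]
  have hsum_ind : Summable (Set.indicator {x | x ∉ A} μ₁) :=
    summable_of_ne_finset_zero hsupp
  have hsum_g : ∀ i : ℕ, Summable (fun u => if n - 1 ≤ G.dist o (v i) then inc i u else 0) := by
    intro i
    refine summable_of_ne_finset_zero (s := G.neighborFinset (v i)) (fun u hu => ?_)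
    have : inc i u = 0 := by
      simp only [hinc]
      rw [if_neg (by simpa [SimpleGraph.mem_neighborFinset] using hu)]
    rw [this]
    split <;> rfl
  have hsum_H : Summable H := summable_sum (fun i _ => hsum_g i)
  -- p ≤ tsum indicator
  have hp2 : p ≤ ∑' u : V, Set.indicator {x | x ∉ A} μ₁ u := by
    rw [← tsum_subtype]
    exact hp
  have hp3 : p ≤ ∑' u : V, H u :=
    hp2.trans (Summable.tsum_le_tsum key1 hsum_ind hsum_H)
  have hH_split : ∑' u : V, H u = ∑ i ∈ Finset.range t,
      ∑' u : V, (if n - 1 ≤ G.dist o (v i) then inc i u else 0) :=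
    Summable.tsum_finsetSum (fun i _ => hsum_g i)
  -- bound each term
  have hterm : ∀ i ∈ Finset.range t,
      (∑' u : V, (if n - 1 ≤ G.dist o (v i) then inc i u else 0)) ≤ c := by
    intro i hi
    have hit := Finset.mem_range.mp hi
    by_cases hcond : n - 1 ≤ G.dist o (v i)
    · simp only [if_pos hcond]
      have hts : ∑' u : V, inc i u = ∑ u ∈ G.neighborFinset (v i), inc i u := by
        refine tsum_eq_sum (fun u hu => ?_)
        simp only [hinc]
        exact if_neg (by simpa [SimpleGraph.mem_neighborFinset] using hu)
      have hdeg : 0 < G.degree (v i) := degree_pos_of_connected G hconn (v i)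
      have hts2 : ∑ u ∈ G.neighborFinset (v i), inc i u = m i := by
        have hpt : ∀ u ∈ G.neighborFinset (v i), inc i u = m i / (G.degree (v i) : ℝ) := by
          intro u hu
          simp only [hinc]
          exact if_pos ((SimpleGraph.mem_neighborFinset _ _ _).mp hu)
        rw [Finset.sum_congr rfl hpt, Finset.sum_const,
          SimpleGraph.card_neighborFinset_eq_degree, nsmul_eq_mul]
        field_simp
      rw [hts, hts2]
      -- m i ≤ exp(-a * dist o (v i) + a') ≤ c
      have hm1 : m i ≤ Real.exp (-a * (G.dist o (v i) : ℝ) + a') :=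
        (h2 i hit).trans (master_mass_le hgreen h0 hstep' i hit.le (v i))
      have hcast : ((n : ℝ) - 1) ≤ (G.dist o (v i) : ℝ) := by
        have := Nat.cast_le (α := ℝ) |>.mpr hcond
        rwa [Nat.cast_sub hn, Nat.cast_one] at this
      have hexp : Real.exp (-a * (G.dist o (v i) : ℝ) + a') ≤ c := by
        rw [hc]
        apply Real.exp_le_exp.mpr
        nlinarith [ha.le]
      linarith
    · simp only [if_neg hcond]
      rw [tsum_zero]
      exact hc0.le
  have hptc : p ≤ (t : ℝ) * c := by
    have := hp3.trans (le_of_eq hH_split) |>.trans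
      ((Finset.sum_le_sum hterm).trans (by rw [Finset.sum_const, Finset.card_range,
        nsmul_eq_mul]))
    exact this
  -- final algebra
  have hEpos : (0:ℝ) < Real.exp (a + a') := Real.exp_pos _
  have hE' : (0:ℝ) < Real.exp (a * ((n:ℝ) - 1) - a') := Real.exp_pos _
  have hcinv : Real.exp (a * ((n:ℝ) - 1) - a') * c = 1 := by
    rw [hc, ← Real.exp_add]
    rw [show a * ((n:ℝ) - 1) - a' + (-a * ((n:ℝ) - 1) + a') = 0 by ring, Real.exp_zero]
  have h6 : p * Real.exp (a * ((n:ℝ) - 1) - a') ≤ (t : ℝ) := by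
    have h7 := mul_le_mul_of_nonneg_right hptc hE'.le
    calc p * Real.exp (a * ((n:ℝ) - 1) - a') ≤ (t : ℝ) * c * Real.exp (a * ((n:ℝ)-1) - a') := h7
      _ = (t : ℝ) * (Real.exp (a * ((n:ℝ)-1) - a') * c) := by ring
      _ = (t : ℝ) := by rw [hcinv, mul_one]
  have hkey : Real.exp (a * (n:ℝ)) = Real.exp (a * ((n:ℝ) - 1) - a') * Real.exp (a + a') := by
    rw [← Real.exp_add]
    congr 1
    ring
  rw [div_mul_eq_mul_div, div_le_iff₀ (by positivity)]
  have htnn : (0:ℝ) ≤ (t:ℝ) := Nat.cast_nonneg t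
  calc p * Real.exp (a * (n:ℝ))
      = (p * Real.exp (a * ((n:ℝ) - 1) - a')) * Real.exp (a + a') := by rw [hkey]; ring
    _ ≤ (t : ℝ) * Real.exp (a + a') := mul_le_mul_of_nonneg_right h6 hEpos.le
    _ ≤ (t : ℝ) * (2 * Real.exp (a + a')) := by nlinarith
end Lower
section Upper
variable {V : Type*}

set_option maxHeartbeats 1000000 in
lemma upper_bound (G : SimpleGraph V) [G.LocallyFinite] [Infinite V]
    (hconn : G.Connected) (D : ℕ) (hD : ∀ v : V, G.degree v ≤ D) (hD2 : 2 ≤ D)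
    (a a' : ℝ) (ha : 0 < a)
    (hgreen : ∀ x y : V, greenFn G x y ≤ ENNReal.ofReal (Real.exp (-a * (G.dist x y : ℝ) + a')))
    (o : V) (p : ℝ) (hp0 : 0 < p) (hp1 : p < 1) (n : ℕ) (hn : 1 ≤ n) :
    ∃ t : ℕ, CanTransport G (gball G o n) p (pointMass o) t ∧
      (t : ℝ) ≤ (1 - p)⁻¹ * Real.exp a' * (D : ℝ) ^ (2 * n) := by
  classical
  have hdeg : ∀ v : V, 0 < G.degree v := degree_pos_of_connected G hconn
  set A : Set V := gball G o n with hA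
  -- the finite ball
  set Bf : Finset V := ((Finset.range n).biUnion (reachSet G o)).filter
    (fun u => G.dist o u < n) with hBf
  have hBf_iff : ∀ u : V, u ∈ Bf ↔ G.dist o u < n := by
    intro u
    constructor
    · intro hu; exact (Finset.mem_filter.mp hu).2
    · intro hu
      refine Finset.mem_filter.mpr ⟨?_, hu⟩
      obtain ⟨q, hq⟩ := hconn.exists_walk_length_eq_dist o u
      have h1 : o ∈ reachSet G o 0 := by simp [reachSet]
      have h2 := mem_reachSet_of_walk G o q 0 h1
      rw [zero_add, hq] at h2
      exact Finset.mem_biUnion.mpr ⟨G.dist o u, Finset.mem_range.mpr hu, h2⟩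
  have hBfo : o ∈ Bf := (hBf_iff o).mpr (by rw [SimpleGraph.dist_self]; omega)
  have hBfne : Bf.Nonempty := ⟨o, hBfo⟩
  set N : ℕ := Bf.card with hN
  have hN1 : 1 ≤ N := Finset.card_pos.mpr hBfne
  have hcard : (N : ℝ) ≤ (D : ℝ) ^ n := by
    have h1 : N ≤ D ^ n := by
      calc N ≤ ((Finset.range n).biUnion (reachSet G o)).card :=
            Finset.card_le_card (Finset.filter_subset _ _)
        _ ≤ ∑ k ∈ Finset.range n, (reachSet G o k).card := Finset.card_biUnion_le
        _ ≤ ∑ k ∈ Finset.range n, D ^ k :=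
            Finset.sum_le_sum fun k _ => card_reachSet_le G o D hD k
        _ ≤ D ^ n := geom_sum_le_pow hD2 n
    calc (N : ℝ) ≤ ((D ^ n : ℕ) : ℝ) := Nat.cast_le.mpr h1
      _ = (D : ℝ) ^ n := by push_cast; ring
  set W : Finset V := Bf ∪ Bf.biUnion (fun v => G.neighborFinset v) with hW
  have hBfW : Bf ⊆ W := Finset.subset_union_left
  have hNW : ∀ v ∈ Bf, G.neighborFinset v ⊆ W := fun v hv =>
    fun u hu => Finset.mem_union_right _ (Finset.mem_biUnion.mpr ⟨v, hv, hu⟩)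
  have hoW : o ∈ W := hBfW hBfo
  -- greedy pick
  have hpick0 : ∀ μ : V → ℝ, ∃ w, w ∈ Bf ∧ ∀ u ∈ Bf, μ u ≤ μ w := by
    intro μ
    obtain ⟨b, hb, h⟩ := Finset.exists_max_image Bf μ hBfne
    exact ⟨b, hb, h⟩
  choose pick hpick1 hpick2 using hpick0
  set step : (V → ℝ) → (V → ℝ) := fun μ =>
    if 0 < μ (pick μ) then topple G μ (pick μ) (μ (pick μ)) else μ with hstep
  set μseq : ℕ → V → ℝ := fun i => step^[i] (pointMass o) with hμseq
  have hseq : ∀ i, μseq (i+1) = step (μseq i) := by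
    intro i
    simp only [hμseq]
    rw [Function.iterate_succ_apply']
  have h0M : μseq 0 = pointMass o := by simp [hμseq]
  -- invariants
  have inv : ∀ i, (∀ u, 0 ≤ μseq i u) ∧ (∀ u, u ∉ W → μseq i u = 0)
      ∧ (∑ u ∈ W, μseq i u = 1) := by
    intro i
    induction i with
    | zero =>
      refine ⟨fun u => by rw [h0M]; simp only [pointMass]; split <;> norm_num,
        fun u hu => ?_, ?_⟩
      · rw [h0M]
        simp only [pointMass]
        exact if_neg (by rintro rfl; exact hu hoW)
      · rw [h0M]
        simp only [pointMass]
        rw [Finset.sum_ite_eq' W o (fun _ => (1:ℝ)), if_pos hoW]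
    | succ i ih =>
      obtain ⟨ih1, ih2, ih3⟩ := ih
      rw [hseq i]
      simp only [hstep]
      split
      · next hpos =>
        set w := pick (μseq i) with hw
        refine ⟨fun u => ?_, fun u hu => ?_, ?_⟩
        · simp only [topple]
          have h2 : 0 ≤ (if G.Adj w u then μseq i w / (G.degree w : ℝ) else 0) := by
            have := (ih1 w); split <;> positivity
          by_cases hu : u = w
          · subst hu; rw [if_pos rfl]; linarith
          · rw [if_neg hu]; have := ih1 u; linarith
        · simp only [topple]
          have hu1 : u ≠ w := fun h => hu (h ▸ hBfW (hpick1 (μseq i)))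
          have hu2 : ¬ G.Adj w u := fun h => hu (hNW w (hpick1 (μseq i))
            ((SimpleGraph.mem_neighborFinset _ _ _).mpr h))
          rw [if_neg hu1, if_neg hu2, ih2 u hu]
          ring
        · rw [conservation G (hdeg w) (hBfW (hpick1 (μseq i))) (hNW w (hpick1 (μseq i)))]
          exact ih3
      · exact ⟨ih1, ih2, ih3⟩
  -- outside mass
  set out : (V → ℝ) → ℝ := fun μ => ∑ u ∈ W \ Bf, μ u with hout
  have hsplit : ∀ i, (∑ u ∈ Bf, μseq i u) = 1 - out (μseq i) := by
    intro i
    have := Finset.sum_sdiff (f := μseq i) hBfW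
    rw [(inv i).2.2] at this
    simp only [hout]
    linarith
  set ε : ℝ := (1 - p) / N with hε
  have hε0 : 0 < ε := by
    have : (0:ℝ) < N := by exact_mod_cast hN1
    apply div_pos <;> linarith
  set vs : ℕ → V := fun i => pick (μseq i) with hvs
  set ms : ℕ → ℝ := fun i => μseq i (vs i) with hms
  -- a valid step happens whenever the outside mass is below p
  have hslack : ∀ i, out (μseq i) < p →
      ε ≤ ms i ∧ μseq (i+1) = topple G (μseq i) (vs i) (ms i) := by
    intro i hi
    have hin : 1 - p < ∑ u ∈ Bf, μseq i u := by rw [hsplit i]; linarith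
    have hex : ∃ u ∈ Bf, ε ≤ μseq i u := by
      by_contra hcon
      push_neg at hcon
      have hlt : ∑ u ∈ Bf, μseq i u < ∑ u ∈ Bf, ε :=
        Finset.sum_lt_sum_of_nonempty hBfne (fun u hu => hcon u hu)
      rw [Finset.sum_const, nsmul_eq_mul] at hlt
      have : (N:ℝ) * ε = 1 - p := by
        rw [hε]
        field_simp
      rw [hN] at this
      rw [this] at hlt
      linarith
    obtain ⟨u, hu, hεu⟩ := hex
    have hmax : μseq i u ≤ ms i := hpick2 (μseq i) u hu
    have hε_ms : ε ≤ ms i := hεu.trans hmax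
    have hpos : 0 < μseq i (pick (μseq i)) := lt_of_lt_of_le hε0 hε_ms
    refine ⟨hε_ms, ?_⟩
    rw [hseq i]
    simp only [hstep]
    rw [if_pos hpos]
  -- existence of a good time
  set E : ℝ := Real.exp a' with hE
  have hE0 : 0 < E := Real.exp_pos _
  set X : ℝ := (N:ℝ)^2 * E / (1 - p) with hX
  have hX0 : 0 ≤ X := by
    have : (0:ℝ) < N := by exact_mod_cast hN1
    have h1p : (0:ℝ) < 1 - p := by linarith
    positivity
  set M : ℕ := Nat.floor X + 1 with hM
  have hgood : ∃ i, i < M ∧ p ≤ out (μseq i) := by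
    by_contra hcon
    push_neg at hcon
    have hstepM : ∀ i < M, 0 < ms i ∧ ms i ≤ μseq i (vs i)
        ∧ μseq (i+1) = topple G (μseq i) (vs i) (ms i) := by
      intro i hiM
      obtain ⟨hεm, heq⟩ := hslack i (hcon i hiM)
      exact ⟨lt_of_lt_of_le hε0 hεm, le_rfl, heq⟩
    -- emission bound
    have hemit : ∑ j ∈ Finset.range M, ms j ≤ (N:ℝ) * E := by
      have hmaps : ∀ j ∈ Finset.range M, vs j ∈ Bf := fun j _ => hpick1 (μseq j)
      rw [← Finset.sum_fiberwise_of_maps_to hmaps ms]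
      have hone : ∀ w ∈ Bf, (∑ j ∈ (Finset.range M).filter (fun j => vs j = w), ms j) ≤ E := by
        intro w _
        have heq : (∑ j ∈ (Finset.range M).filter (fun j => vs j = w), ms j)
            = ∑ j ∈ Finset.range M, (if w = vs j then ms j else 0) := by
          rw [Finset.sum_filter]
          exact Finset.sum_congr rfl fun j _ => if_congr eq_comm rfl rfl
        rw [heq]
        refine (master_emission_le hgreen h0M hstepM w).trans ?_
        rw [hE]
        apply Real.exp_le_exp.mpr
        have : (0:ℝ) ≤ (G.dist o w : ℝ) := Nat.cast_nonneg _
        nlinarith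
      calc ∑ w ∈ Bf, (∑ j ∈ (Finset.range M).filter (fun j => vs j = w), ms j)
          ≤ ∑ w ∈ Bf, E := Finset.sum_le_sum hone
        _ = (N:ℝ) * E := by rw [Finset.sum_const, nsmul_eq_mul, hN]
    have hlow : (M:ℝ) * ε ≤ ∑ j ∈ Finset.range M, ms j := by
      calc (M:ℝ) * ε = ∑ _j ∈ Finset.range M, ε := by
            rw [Finset.sum_const, Finset.card_range, nsmul_eq_mul]
        _ ≤ ∑ j ∈ Finset.range M, ms j :=
            Finset.sum_le_sum fun j hj => (hslack j (hcon j (Finset.mem_range.mp hj))).1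
    have hXε : X * ε = (N:ℝ) * E := by
      have hNpos : (0:ℝ) < N := by exact_mod_cast hN1
      have h1p : (0:ℝ) < 1 - p := by linarith
      rw [hX, hε]
      field_simp
    have hMX : (M:ℝ) ≤ X := by
      have h := hlow.trans hemit
      rw [← hXε] at h
      exact le_of_mul_le_mul_right h hε0
    have hMX2 : X < (M:ℝ) := by
      rw [hM]
      push_cast
      exact Nat.lt_floor_add_one X
    linarith
  -- the first good time
  have hex : ∃ i, p ≤ out (μseq i) := ⟨hgood.choose, hgood.choose_spec.2⟩
  set t₀ : ℕ := Nat.find hex with ht₀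
  have hspec : p ≤ out (μseq t₀) := Nat.find_spec hex
  have hmin : ∀ j < t₀, out (μseq j) < p := fun j hj =>
    lt_of_not_ge (Nat.find_min hex hj)
  have ht₀M : t₀ < M :=
    lt_of_le_of_lt (Nat.find_min' hex hgood.choose_spec.2) hgood.choose_spec.1
  have hstept : ∀ i < t₀, 0 < ms i ∧ ms i ≤ μseq i (vs i)
      ∧ μseq (i+1) = topple G (μseq i) (vs i) (ms i) := by
    intro i hi
    obtain ⟨hεm, heq⟩ := hslack i (hmin i hi)
    exact ⟨lt_of_lt_of_le hε0 hεm, le_rfl, heq⟩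
  refine ⟨t₀, ⟨μseq t₀, ⟨μseq, h0M, rfl, fun i hi => ⟨vs i, ms i, hstept i hi⟩⟩, ?_⟩, ?_⟩
  · -- p ≤ tsum outside
    have hsummable : Summable (Set.indicator {x | x ∉ A} (μseq t₀)) := by
      refine summable_of_ne_finset_zero (s := W) (fun u hu => ?_)
      have := (inv t₀).2.1 u hu
      simp [Set.indicator_apply, this]
    have h1 : out (μseq t₀) ≤ ∑' u : V, Set.indicator {x | x ∉ A} (μseq t₀) u := by
      simp only [hout]
      have heqs : ∀ u ∈ W \ Bf, μseq t₀ u = Set.indicator {x | x ∉ A} (μseq t₀) u := by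
        intro u hu
        have hu2 : u ∉ Bf := (Finset.mem_sdiff.mp hu).2
        have huA : u ∉ A := by
          intro h
          exact hu2 ((hBf_iff u).mpr (by simpa [hA, gball, Set.mem_setOf_eq] using h))
        exact (Set.indicator_of_mem (show u ∈ {x | x ∉ A} from huA) _).symm
      rw [Finset.sum_congr rfl heqs]
      refine Summable.sum_le_tsum _ (fun u _ => ?_) hsummable
      rw [Set.indicator_apply]
      split
      · exact (inv t₀).1 u
      · exact le_rfl
    have h2 : (∑' u : V, Set.indicator {x | x ∉ A} (μseq t₀) u)
        = ∑' (v : {v : V // v ∉ A}), μseq t₀ v := (tsum_subtype {x | x ∉ A} (μseq t₀)).symm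
    calc p ≤ out (μseq t₀) := hspec
      _ ≤ ∑' u : V, Set.indicator {x | x ∉ A} (μseq t₀) u := h1
      _ = ∑' (v : {v : V // v ∉ A}), μseq t₀ v := h2
  · -- size bound
    have ht0X : (t₀ : ℝ) ≤ X := by
      have h1 : t₀ ≤ Nat.floor X := by omega
      calc (t₀ : ℝ) ≤ (Nat.floor X : ℝ) := Nat.cast_le.mpr h1
        _ ≤ X := Nat.floor_le hX0
    refine ht0X.trans ?_
    rw [hX, hE]
    have h1p : (0:ℝ) < 1 - p := by linarith
    have hDn : (N:ℝ)^2 ≤ (D:ℝ)^(2*n) := by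
      rw [two_mul, pow_add]
      have hN0 : (0:ℝ) ≤ N := Nat.cast_nonneg N
      calc (N:ℝ)^2 = (N:ℝ)*(N:ℝ) := sq (N:ℝ)
        _ ≤ (D:ℝ)^n * (D:ℝ)^n := mul_le_mul hcard hcard hN0 (by positivity)
    calc (N:ℝ)^2 * Real.exp a' / (1-p) = (1-p)⁻¹ * Real.exp a' * (N:ℝ)^2 := by ring
      _ ≤ (1-p)⁻¹ * Real.exp a' * (D:ℝ)^(2*n) :=
        mul_le_mul_of_nonneg_left hDn
          (mul_nonneg (inv_nonneg.mpr h1p.le) (Real.exp_pos a').le)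
end Upper
section DTwo
variable {V : Type*}

lemma two_le_deg_bound (G : SimpleGraph V) [G.LocallyFinite] [Infinite V]
    (hconn : G.Connected) (D : ℕ) (hD : ∀ v : V, G.degree v ≤ D) : 2 ≤ D := by
  classical
  by_contra h
  push_neg at h
  have o : V := Classical.arbitrary V
  have hdeg := degree_pos_of_connected G hconn
  obtain ⟨u, hu⟩ := (G.degree_pos_iff_exists_adj o).mp (hdeg o)
  have hsingle : ∀ x y : V, G.Adj x y → G.neighborFinset x = {y} := by
    intro x y hxy
    have hcard : (G.neighborFinset x).card ≤ 1 := by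
      rw [SimpleGraph.card_neighborFinset_eq_degree]
      have := hD x
      omega
    have hy : y ∈ G.neighborFinset x := (SimpleGraph.mem_neighborFinset _ _ _).mpr hxy
    exact Finset.eq_singleton_iff_unique_mem.mpr
      ⟨hy, fun z hz => Finset.card_le_one.mp hcard z hz y hy⟩
  have hclosed : ∀ x y, x ∈ ({o, u} : Finset V) → G.Adj x y → y ∈ ({o, u} : Finset V) := by
    intro x y hx hxy
    rcases Finset.mem_insert.mp hx with h1 | h1
    · subst h1
      have hmem : y ∈ G.neighborFinset x := (SimpleGraph.mem_neighborFinset _ _ _).mpr hxy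
      rw [hsingle x u hu] at hmem
      rw [Finset.mem_singleton.mp hmem]
      simp
    · rw [Finset.mem_singleton.mp h1] at hxy
      have hou : G.Adj u o := hu.symm
      have hmem : y ∈ G.neighborFinset u := (SimpleGraph.mem_neighborFinset _ _ _).mpr hxy
      rw [hsingle u o hou] at hmem
      rw [Finset.mem_singleton.mp hmem]
      simp
  have hwalk : ∀ (x z : V) (q : G.Walk x z),
      x ∈ ({o, u} : Finset V) → z ∈ ({o, u} : Finset V) := by
    intro x z q
    induction q with
    | nil => exact id
    | cons hadj q ih => intro hx; exact ih (hclosed _ _ hx hadj)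
  obtain ⟨z, hz⟩ := Infinite.exists_notMem_finset ({o, u} : Finset V)
  obtain ⟨q⟩ := hconn o z
  exact hz (hwalk o z q (by simp))

end DTwo

/-- **Bounded degree graphs with exponential decay of the Green's function**
(Florescu–Peres–Rácz, Theorem 7.2). Let `G` be an infinite, connected graph with all degrees at
most `D`, and suppose `g(x,y) ≤ exp(-a·d(x,y) + a')` for all vertices `x,y`, where `g` is the
Green's function of simple random walk, `a > 0`. Starting from the unit point mass at `o`, for
every `n ≥ 1` the number of toppling moves needed to transport mass `p ∈ (0,1)` to graph distance
at least `n` from `o` is at most `(1-p)⁻¹ · e^{a'} · D^{2n}`, and every successful sequence of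
toppling moves has length at least `(p / (2·e^{a+a'})) · e^{a·n}`. -/
theorem controlled_diffusion_exp_decay_green {V : Type*} (G : SimpleGraph V) [G.LocallyFinite]
    [Infinite V] (hconn : G.Connected) (D : ℕ) (hD : ∀ v : V, G.degree v ≤ D)
    (a a' : ℝ) (ha : 0 < a)
    (hgreen : ∀ x y : V, greenFn G x y ≤ ENNReal.ofReal (Real.exp (-a * (G.dist x y : ℝ) + a')))
    (o : V) (p : ℝ) (hp0 : 0 < p) (hp1 : p < 1) (n : ℕ) (hn : 1 ≤ n) :
    (∃ t : ℕ, CanTransport G (gball G o n) p (pointMass o) t ∧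
      (t : ℝ) ≤ (1 - p)⁻¹ * Real.exp a' * (D : ℝ) ^ (2 * n)) ∧
    (∀ t : ℕ, CanTransport G (gball G o n) p (pointMass o) t →
      p / (2 * Real.exp (a + a')) * Real.exp (a * n) ≤ (t : ℝ)) := by
  have hD2 : 2 ≤ D := two_le_deg_bound G hconn D hD
  exact ⟨upper_bound G hconn D hD hD2 a a' ha hgreen o p hp0 hp1 n hn,
    fun t hcan => lower_bound G hconn a a' ha hgreen o p hp0 hp1 n hn t hcan⟩

end
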